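/- Let A be an L×L real symmetric positive semidefinite matrix that is strictly diagonally dominant with positive diagonal, i.e., for every i, A_{ii} > Σ_{j≠i} |A_{ij}|. Then A is invertible, and every eigenvalue μ of A⁻¹ satisfies, for some index i, |μ − 1/A_{ii}| ≤ r_i / (A_{ii}(1 − r_i)), where r_i = (Σ_{j≠i} |A_{ij}|)/A_{ii} < 1. -/
import Mathlib

open Matrix Finset

/-- Gershgorin-type bound: if a real symmetric positive semidefinite matrix `A` is strictly
diagonally dominant with positive diagonal, then `A` is invertible and every eigenvalue `μ`
of `A⁻¹` lies in some disk centered at `1/A_{ii}` of radius `r_i / (A_{ii} (1 - r_i))`,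
where `r_i = (Σ_{j≠i} |A_{ij}|) / A_{ii} < 1`. -/
theorem inv_eigenvalue_gershgorin (L : ℕ) (hL : 1 ≤ L)
    (A : Matrix (Fin L) (Fin L) ℝ) (hA : A.PosSemidef)
    (hdom : ∀ i, (∑ j ∈ Finset.univ.erase i, |A i j|) < A i i) :
    IsUnit A.det ∧
    (∀ i, (∑ j ∈ Finset.univ.erase i, |A i j|) / A i i < 1) ∧
    (∀ (μ : ℝ) (v : Fin L → ℝ), v ≠ 0 → A⁻¹.mulVec v = μ • v →
      ∃ i, |μ - 1 / A i i| ≤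
        ((∑ j ∈ Finset.univ.erase i, |A i j|) / A i i) /
          (A i i * (1 - (∑ j ∈ Finset.univ.erase i, |A i j|) / A i i))) := by
  have hdiagpos : ∀ i, 0 < A i i := fun i =>
    lt_of_le_of_lt (Finset.sum_nonneg fun j _ => abs_nonneg _) (hdom i)
  have hdet : A.det ≠ 0 := by
    apply det_ne_zero_of_sum_row_lt_diag
    intro k
    simpa [Real.norm_eq_abs, abs_of_pos (hdiagpos k)] using hdom k
  have hunit : IsUnit A.det := isUnit_iff_ne_zero.mpr hdet
  refine ⟨hunit, fun i => (div_lt_one (hdiagpos i)).mpr (hdom i), ?_⟩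
  intro μ v hv hmul
  -- multiply by A
  have hAv : μ • A.mulVec v = v := by
    have := congrArg A.mulVec hmul
    rw [Matrix.mulVec_smul, Matrix.mulVec_mulVec, Matrix.mul_nonsing_inv A hunit,
      Matrix.one_mulVec] at this
    exact this.symm
  have hμ : μ ≠ 0 := by
    rintro rfl
    apply hv
    rw [← hAv, zero_smul]
  have hAv' : A.mulVec v = μ⁻¹ • v := by
    have h := congrArg (fun w => μ⁻¹ • w) hAv
    simpa [smul_smul, inv_mul_cancel₀ hμ] using h
  -- pick index of max |v i|
  have : Nonempty (Fin L) := ⟨⟨0, hL⟩⟩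
  obtain ⟨i, -, h_i⟩ := Finset.exists_mem_eq_sup' Finset.univ_nonempty (fun i => |v i|)
  have hvi : v i ≠ 0 := by
    contrapose! hv
    ext j
    have hj : |v j| ≤ |v i| := h_i ▸ Finset.le_sup' (fun i => |v i|) (Finset.mem_univ j)
    rw [hv, abs_zero] at hj
    simpa using le_antisymm hj (abs_nonneg _)
  have hvipos : 0 < |v i| := abs_pos.mpr hvi
  have hvj : ∀ j, |v j| ≤ |v i| := fun j =>
    h_i ▸ Finset.le_sup' (fun i => |v i|) (Finset.mem_univ j)
  set R := ∑ j ∈ Finset.univ.erase i, |A i j| with hR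
  obtain ⟨lam, hlam⟩ : ∃ l : ℝ, l = μ⁻¹ := ⟨_, rfl⟩
  rw [← hlam] at hAv'
  -- Gershgorin for lam
  have hrow : (lam - A i i) * v i = ∑ j ∈ Finset.univ.erase i, A i j * v j := by
    have h1 : ∑ j, A i j * v j = lam * v i := congrFun hAv' i
    rw [Finset.sum_erase_eq_sub (Finset.mem_univ i), h1]
    ring
  have hG : |lam - A i i| ≤ R := by
    have h2 : |lam - A i i| * |v i| ≤ R * |v i| := by
      rw [← abs_mul, hrow]
      calc |∑ j ∈ Finset.univ.erase i, A i j * v j|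
          ≤ ∑ j ∈ Finset.univ.erase i, |A i j * v j| := Finset.abs_sum_le_sum_abs _ _
        _ ≤ ∑ j ∈ Finset.univ.erase i, |A i j| * |v i| := by
            refine Finset.sum_le_sum fun j _ => ?_
            rw [abs_mul]
            exact mul_le_mul_of_nonneg_left (hvj j) (abs_nonneg _)
        _ = R * |v i| := by rw [← Finset.sum_mul]
    exact le_of_mul_le_mul_right h2 hvipos
  -- |lam| ≥ A i i - R > 0
  have hRlt : R < A i i := hdom i
  have hlamlow : A i i - R ≤ |lam| := by
    have := abs_sub_abs_le_abs_sub (A i i) lam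
    rw [abs_of_pos (hdiagpos i), abs_sub_comm] at this
    linarith
  have hlampos : 0 < |lam| := lt_of_lt_of_le (by linarith) hlamlow
  refine ⟨i, ?_⟩
  have hμeq : μ = lam⁻¹ := by rw [hlam, inv_inv]
  have hlamne : lam ≠ 0 := abs_pos.mp hlampos
  have h0 : A i i ≠ 0 := ne_of_gt (hdiagpos i)
  have key : |μ - 1 / A i i| = |A i i - lam| / (|lam| * A i i) := by
    rw [hμeq, show lam⁻¹ - 1 / A i i = (A i i - lam) / (lam * A i i) by
      field_simp [hlamne], abs_div, abs_mul, abs_of_pos (hdiagpos i)]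
  rw [key, abs_sub_comm]
  have hbound : |lam - A i i| / (|lam| * A i i) ≤ R / ((A i i - R) * A i i) := by
    apply div_le_div₀ (Finset.sum_nonneg fun j _ => abs_nonneg _) hG
    · exact mul_pos (by linarith) (hdiagpos i)
    · exact mul_le_mul_of_nonneg_right hlamlow (le_of_lt (hdiagpos i))
  refine hbound.trans (le_of_eq ?_)
  have e1 : A i i * (1 - R / A i i) = A i i - R := by field_simp
  rw [e1, div_div, mul_comm]
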